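/- Let Σ be a world function on Ω and P = (P₀,…,Pₙ) an (n+1)-tuple of points of Ω. Then the quantity Fₙ(P) := det[(P₀Pᵢ.P₀P_k)]_{i,k=1,…,n}, where (P₀Pᵢ.P₀P_k) = Σ(Pᵢ,P₀) + Σ(P₀,P_k) − Σ(Pᵢ,P_k), is invariant under every permutation of the n+1 points P₀, P₁, …, Pₙ. -/
import Mathlib

open Matrix Equiv

namespace FnInv

variable {Ω : Type*}

def Gmat (W : Ω → Ω → ℝ) (n : ℕ) (P : Fin (n + 1) → Ω) : Matrix (Fin n) (Fin n) ℝ :=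
  Matrix.of fun i k => W (P i.succ) (P 0) + W (P 0) (P k.succ) - W (P i.succ) (P k.succ)

def Emat {n : ℕ} (j : Fin n) : Matrix (Fin n) (Fin n) ℝ :=
  Matrix.of fun i a => (if i = a ∧ a ≠ j then (1 : ℝ) else 0) + (if a = j then (-1 : ℝ) else 0)

lemma Emat_mul_apply {n : ℕ} (j : Fin n) (M : Matrix (Fin n) (Fin n) ℝ) (i b : Fin n) :
    (Emat j * M) i b = (if i = j then 0 else M i b) - M j b := by
  rw [Matrix.mul_apply]
  have h : ∀ a, Emat j i a * M a b =
      (if a = i then (if i = j then 0 else M i b) else 0) +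
      (if a = j then -M j b else 0) := by
    intro a
    by_cases h1 : a = i <;> by_cases h2 : a = j <;>
      simp [Emat, h1, h2] <;> simp_all [eq_comm] <;> ring
  simp only [h, Finset.sum_add_distrib, Finset.sum_ite_eq', Finset.mem_univ, if_true]
  ring

lemma mul_Emat_apply {n : ℕ} (j : Fin n) (M : Matrix (Fin n) (Fin n) ℝ) (i b : Fin n) :
    (M * (Emat j)ᵀ) i b = (if b = j then 0 else M i b) - M i j := by
  rw [Matrix.mul_apply]
  have h : ∀ a, M i a * (Emat j)ᵀ a b =
      (if a = b then (if b = j then 0 else M i b) else 0) +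
      (if a = j then -M i j else 0) := by
    intro a
    by_cases h1 : a = b <;> by_cases h2 : a = j <;>
      simp [Emat, Matrix.transpose_apply, h1, h2] <;> simp_all [eq_comm] <;> ring
  simp only [h, Finset.sum_add_distrib, Finset.sum_ite_eq', Finset.mem_univ, if_true]
  ring

lemma Emat_apply {n : ℕ} (j : Fin n) (i b : Fin n) :
    Emat j i b = (if i = b ∧ b ≠ j then (1 : ℝ) else 0) + (if b = j then (-1 : ℝ) else 0) := rfl

lemma Emat_sq {n : ℕ} (j : Fin n) : Emat j * Emat j = 1 := by
  ext i b
  rw [Emat_mul_apply]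
  by_cases h1 : i = j <;> by_cases h2 : b = j <;> by_cases h3 : i = b <;>
    simp_all [Emat_apply, Matrix.one_apply] <;> tauto

lemma det_swap0 (W : Ω → Ω → ℝ) (hW : ∀ P, W P P = 0) (n : ℕ) (P : Fin (n + 1) → Ω)
    (p : Fin (n + 1)) :
    (Gmat W n (P ∘ Equiv.swap 0 p)).det = (Gmat W n P).det := by
  rcases eq_or_ne p 0 with rfl | hp
  · simp
  · set j : Fin n := p.pred hp with hj
    have hjs : j.succ = p := Fin.succ_pred p hp
    have key : Gmat W n (P ∘ Equiv.swap 0 p) = Emat j * Gmat W n P * (Emat j)ᵀ := by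
      ext i k
      rw [Matrix.mul_assoc, Emat_mul_apply, mul_Emat_apply, mul_Emat_apply]
      have e0 : (P ∘ Equiv.swap 0 p) 0 = P p := by simp
      have ep : ∀ m : Fin n, m ≠ j → (P ∘ Equiv.swap 0 p) m.succ = P m.succ := by
        intro m hm
        have h1 : m.succ ≠ 0 := Fin.succ_ne_zero m
        have h2 : m.succ ≠ p := by rw [← hjs]; exact fun h => hm (Fin.succ_injective _ h)
        simp [Function.comp, Equiv.swap_apply_of_ne_of_ne h1 h2]
      have epj : (P ∘ Equiv.swap 0 p) p = P 0 := by
        simp [Function.comp]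
      by_cases hik : i = j <;> by_cases hkk : k = j
      · subst hik; subst hkk
        simp only [Gmat, Matrix.of_apply, hjs, epj, e0, if_pos rfl, hW, ite_true]
        ring
      · subst hik
        simp only [Gmat, Matrix.of_apply, hjs, epj, e0, ep k hkk, if_pos rfl, if_neg hkk, hW, ite_true]
        ring
      · subst hkk
        simp only [Gmat, Matrix.of_apply, hjs, epj, e0, ep i hik, if_pos rfl, if_neg hik, hW, ite_true]
        ring
      · simp only [Gmat, Matrix.of_apply, hjs, e0, ep i hik, ep k hkk, if_neg hik, if_neg hkk, hW]
        ring
    rw [key, Matrix.det_mul, Matrix.det_mul, Matrix.det_transpose]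
    have : (Emat j).det * (Emat j).det = 1 := by
      rw [← Matrix.det_mul, Emat_sq, Matrix.det_one]
    calc (Emat j).det * (Gmat W n P).det * (Emat j).det
        = ((Emat j).det * (Emat j).det) * (Gmat W n P).det := by ring
      _ = (Gmat W n P).det := by rw [this, one_mul]

lemma det_fix0 (W : Ω → Ω → ℝ) (n : ℕ) (P : Fin (n + 1) → Ω) (e : Equiv.Perm (Fin n)) :
    (Gmat W n (P ∘ Equiv.Perm.decomposeFin.symm (0, e))).det = (Gmat W n P).det := by
  have : Gmat W n (P ∘ Equiv.Perm.decomposeFin.symm (0, e)) = (Gmat W n P).submatrix e e := by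
    ext i k
    simp [Gmat, Function.comp, Equiv.Perm.decomposeFin_symm_apply_succ]
  rw [this, Matrix.det_submatrix_equiv_self]

lemma det_perm (W : Ω → Ω → ℝ) (hW : ∀ P, W P P = 0) (n : ℕ) (P : Fin (n + 1) → Ω)
    (σ : Equiv.Perm (Fin (n + 1))) :
    (Gmat W n (P ∘ σ)).det = (Gmat W n P).det := by
  obtain ⟨⟨p, e⟩, rfl⟩ : ∃ pe, Equiv.Perm.decomposeFin.symm pe = σ :=
    ⟨Equiv.Perm.decomposeFin σ, Equiv.symm_apply_apply _ _⟩
  have hsplit : P ∘ Equiv.Perm.decomposeFin.symm (p, e)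
      = (P ∘ Equiv.swap 0 p) ∘ Equiv.Perm.decomposeFin.symm (0, e) := by
    funext x
    refine Fin.cases ?_ (fun i => ?_) x <;>
      simp [Function.comp, Equiv.Perm.decomposeFin_symm_apply_succ]
  rw [hsplit, det_fix0, det_swap0 W hW]

end FnInv

/-- the quantity `Fₙ(P) = det[(P₀Pᵢ.P₀P_k)]` is invariant under
every permutation of the `n+1` points `P₀, …, Pₙ`. -/
theorem Fn_invariant_under_permutation
    {Ω : Type*} [Nonempty Ω]
    (W : Ω → Ω → ℝ) (hW : ∀ P, W P P = 0)
    (n : ℕ) (P : Fin (n + 1) → Ω) (σ : Equiv.Perm (Fin (n + 1))) :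
    Matrix.det (Matrix.of fun i k : Fin n =>
        W ((P ∘ σ) i.succ) ((P ∘ σ) 0) + W ((P ∘ σ) 0) ((P ∘ σ) k.succ)
          - W ((P ∘ σ) i.succ) ((P ∘ σ) k.succ)) =
      Matrix.det (Matrix.of fun i k : Fin n =>
        W (P i.succ) (P 0) + W (P 0) (P k.succ) - W (P i.succ) (P k.succ)) := by
  exact FnInv.det_perm W hW n P σ
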